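/- arXiv:1501.05103 — 4 statements merged into one kernel-verified Lean document; each statement's English description precedes it below -/
import Mathlib

section
/- Let f : ℝ → ℝ be locally Lipschitz and suppose there exist a ≤ b with f(a) ≥ f(s) ≥ f(b) for all s ∈ [a,b] and f(s) = f(a) for s ≤ a, f(s) = f(b) for s ≥ b. Let u ∈ C^1([0,T); L^∞(Ω)) solve u_t = f(u) - ⟨f(u)⟩ with a ≤ u_0(x) ≤ b a.e. Then a ≤ u(x,t) ≤ b for a.e. x ∈ Ω and every t ∈ [0,T). -/
open Set Filter Topology MeasureTheory

/-- One-sided invariance for a scalar ODE: if the derivative is nonpositive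
whenever `v ≥ b`, and `v 0 ≤ b`, then `v t ≤ b` on `[0, T)`. -/
lemma aux_upper (b T : ℝ) (v g : ℝ → ℝ)
    (hd : ∀ t ∈ Ico (0 : ℝ) T, HasDerivAt v (g t) t)
    (hg : ∀ t ∈ Ico (0 : ℝ) T, b ≤ v t → g t ≤ 0)
    (h0 : v 0 ≤ b) : ∀ t ∈ Ico (0 : ℝ) T, v t ≤ b := by
  intro t0 ht0
  by_contra hcon
  push_neg at hcon
  have hsub : Icc (0 : ℝ) t0 ⊆ Ico (0 : ℝ) T := fun s hs => ⟨hs.1, lt_of_le_of_lt hs.2 ht0.2⟩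
  have hcont : ContinuousOn v (Icc 0 t0) := fun s hs =>
    ((hd s (hsub hs)).continuousAt).continuousWithinAt
  set S : Set ℝ := Icc 0 t0 ∩ v ⁻¹' Iic b with hS_def
  have hSclosed : IsClosed S := hcont.preimage_isClosed_of_isClosed isClosed_Icc isClosed_Iic
  have hSsub : S ⊆ Icc 0 t0 := inter_subset_left
  have hScomp : IsCompact S := isCompact_Icc.of_isClosed_subset hSclosed hSsub
  have h0S : (0 : ℝ) ∈ S := ⟨⟨le_rfl, ht0.1⟩, h0⟩
  have hne : S.Nonempty := ⟨0, h0S⟩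
  set t1 := sSup S with ht1_def
  have ht1S : t1 ∈ S := hScomp.sSup_mem hne
  have ht1Icc : t1 ∈ Icc (0 : ℝ) t0 := hSsub ht1S
  have ht1b : v t1 ≤ b := ht1S.2
  have ht1lt : t1 < t0 := lt_of_le_of_ne ht1Icc.2 (fun h => by rw [h] at ht1b; exact absurd ht1b (not_le.2 hcon))
  have hgt : ∀ s ∈ Ioc t1 t0, b ≤ v s := by
    intro s hs
    by_contra hvs
    push_neg at hvs
    have hsS : s ∈ S := ⟨⟨le_trans ht1Icc.1 hs.1.le, hs.2⟩, hvs.le⟩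
    exact absurd (le_csSup hScomp.bddAbove hsS) (not_le.2 hs.1)
  have hanti : AntitoneOn v (Icc t1 t0) := by
    have hIsub : Icc t1 t0 ⊆ Icc 0 t0 := Icc_subset_Icc ht1Icc.1 le_rfl
    refine antitoneOn_of_deriv_nonpos (convex_Icc t1 t0) (hcont.mono hIsub) ?_ ?_
    · intro s hs
      rw [interior_Icc] at hs
      exact ((hd s (hsub (hIsub (Ioo_subset_Icc_self hs)))).differentiableAt).differentiableWithinAt
    · intro s hs
      rw [interior_Icc] at hs
      have hsI : s ∈ Ico (0 : ℝ) T := hsub (hIsub (Ioo_subset_Icc_self hs))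
      rw [(hd s hsI).deriv]
      exact hg s hsI (hgt s ⟨hs.1, hs.2.le⟩)
  have : v t0 ≤ v t1 := hanti ⟨le_rfl, ht1lt.le⟩ ⟨ht1lt.le, le_rfl⟩ ht1lt.le
  linarith

/-- Invariance of the interval `[a,b]`: if `f(a) ≥ f(s) ≥ f(b)` on `[a,b]` and
`f` is flat outside `[a,b]`, then solutions of `u_t = f(u) - ⟨f(u)⟩` starting
in `[a,b]` a.e. stay in `[a,b]` a.e. -/
theorem stmt3 {N : ℕ} (Ω : Set (Fin N → ℝ)) (hΩo : IsOpen Ω)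
    (hΩb : Bornology.IsBounded Ω) (hΩpos : 0 < volume Ω)
    (f : ℝ → ℝ) (hf : LocallyLipschitz f)
    (a b : ℝ) (hab : a ≤ b)
    (hmid : ∀ s ∈ Icc a b, f b ≤ f s ∧ f s ≤ f a)
    (hflatl : ∀ s ≤ a, f s = f a) (hflatr : ∀ s, b ≤ s → f s = f b)
    (T : ℝ) (hT : 0 < T) (u : ℝ → (Fin N → ℝ) → ℝ)
    (hmeas : Measurable (Function.uncurry u))
    (C : ℝ) (hbd : ∀ t ∈ Ico (0 : ℝ) T, ∀ x ∈ Ω, |u t x| ≤ C)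
    (hode : ∀ x ∈ Ω, ∀ t ∈ Ico (0 : ℝ) T,
      HasDerivAt (fun τ => u τ x) (f (u t x) - ⨍ y in Ω, f (u t y)) t)
    (hinit : ∀ᵐ x ∂(volume.restrict Ω), a ≤ u 0 x ∧ u 0 x ≤ b) :
    ∀ t ∈ Ico (0 : ℝ) T,
      ∀ᵐ x ∂(volume.restrict Ω), a ≤ u t x ∧ u t x ≤ b := by
  -- global bounds on f
  have hfab : f b ≤ f a := (hmid a ⟨le_rfl, hab⟩).1
  have hfb : ∀ s, f b ≤ f s := by
    intro s
    rcases le_total s a with h | h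
    · rw [hflatl s h]; exact hfab
    · rcases le_total s b with h' | h'
      · exact (hmid s ⟨h, h'⟩).1
      · rw [hflatr s h']
  have hfa : ∀ s, f s ≤ f a := by
    intro s
    rcases le_total s a with h | h
    · rw [hflatl s h]
    · rcases le_total s b with h' | h'
      · exact (hmid s ⟨h, h'⟩).2
      · rw [hflatr s h']; exact hfab
  have hΩm := hΩo.measurableSet
  have hμfin : volume Ω ≠ ⊤ := hΩb.measure_lt_top.ne
  have μpos : 0 < (volume Ω).toReal := ENNReal.toReal_pos hΩpos.ne' hμfin
  have hintg : ∀ t, IntegrableOn (fun y => f (u t y)) Ω volume := by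
    intro t
    refine Measure.integrableOn_of_bounded (M := |f a| + |f b|) hμfin
      ((hf.continuous.measurable.comp (hmeas.comp measurable_prodMk_left)).aestronglyMeasurable) ?_
    filter_upwards with y
    rw [Real.norm_eq_abs, abs_le]
    constructor
    · linarith [neg_abs_le (f b), abs_nonneg (f a), hfb (u t y)]
    · linarith [le_abs_self (f a), abs_nonneg (f b), hfa (u t y)]
  have hgb : ∀ t, f b ≤ (⨍ y in Ω, f (u t y)) ∧ (⨍ y in Ω, f (u t y)) ≤ f a := by
    intro t
    rw [setAverage_eq, smul_eq_mul]
    constructor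
    · have h1 : f b * (volume Ω).toReal ≤ ∫ y in Ω, f (u t y) :=
        setIntegral_ge_of_const_le_real hΩm hμfin (fun y _ => hfb _) (hintg t)
      rw [le_inv_mul_iff₀ (show 0 < volume.real Ω from μpos), mul_comm]
      exact h1
    · have h2 : ∫ y in Ω, f (u t y) ≤ ∫ _y in Ω, f a :=
        setIntegral_mono_on (hintg t) (integrableOn_const hμfin) hΩm
          (fun y _ => hfa _)
      rw [setIntegral_const, smul_eq_mul] at h2
      rw [inv_mul_le_iff₀ (show 0 < volume.real Ω from μpos)]
      linarith
  intro t ht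
  filter_upwards [hinit, ae_restrict_mem hΩm] with x hx hxΩ
  constructor
  · -- lower bound via aux_upper applied to -u
    have := aux_upper (-a) T (fun τ => -(u τ x))
      (fun τ => -(f (u τ x) - ⨍ y in Ω, f (u τ y)))
      (fun s hs => (hode x hxΩ s hs).neg)
      (fun s hs hvs => by
        have hua : u s x ≤ a := by linarith [neg_le_neg_iff.1 hvs]
        have : f (u s x) = f a := hflatl _ hua
        have := (hgb s).2
        simp only [neg_sub, sub_nonpos]
        linarith)
      (by simpa using hx.1) t ht
    simpa using this
  · -- upper bound
    refine aux_upper b T (fun τ => u τ x)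
      (fun τ => f (u τ x) - ⨍ y in Ω, f (u τ y))
      (fun s hs => hode x hxΩ s hs)
      (fun s hs hvs => by
        have : f (u s x) = f b := hflatr _ hvs
        have := (hgb s).1
        simp only [sub_nonpos]
        linarith)
      hx.2 t ht
end

section
/- Let f satisfy: f ∈ C^1(ℝ), f' < 0 on (-∞,m) ∪ (M,∞), f' > 0 on (m,M), and let s_* < m < M < s^* satisfy f(s_*) = f(M), f(s^*) = f(m). Let u be the global solution of u_t = f(u) - ⟨f(u)⟩ with u_0 ∈ L^∞(Ω). If s_* ≤ u(x,t_1) ≤ s^* a.e. for some t_1 ≥ 0, then s_* ≤ u(x,t) ≤ s^* a.e. for all t ≥ t_1. -/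
open Set Filter Topology MeasureTheory

set_option maxHeartbeats 1000000 in
/-- For a bistable nonlinearity with `f(s_*) = f(M)`, `f(s^*) = f(m)`, the
interval `[s_*, s^*]` is invariant for `u_t = f(u) - ⟨f(u)⟩`: if
`s_* ≤ u(·,t₁) ≤ s^*` a.e. then `s_* ≤ u(·,t) ≤ s^*` a.e. for all `t ≥ t₁`. -/
theorem stmt4 {N : ℕ} (Ω : Set (Fin N → ℝ)) (hΩo : IsOpen Ω)
    (hΩb : Bornology.IsBounded Ω) (hΩpos : 0 < volume Ω)
    (f : ℝ → ℝ) (hf : ContDiff ℝ 1 f)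
    (m M : ℝ) (hmM : m < M)
    (hf1 : ∀ s, s < m → deriv f s < 0) (hf2 : ∀ s, M < s → deriv f s < 0)
    (hf3 : ∀ s ∈ Ioo m M, 0 < deriv f s)
    (sL sU : ℝ) (hsL : sL < m) (hsU : M < sU)
    (hfsL : f sL = f M) (hfsU : f sU = f m)
    (u : ℝ → (Fin N → ℝ) → ℝ)
    (hmeas : Measurable (Function.uncurry u))
    (C : ℝ) (hbd : ∀ t, 0 ≤ t → ∀ x ∈ Ω, |u t x| ≤ C)
    (hode : ∀ x ∈ Ω, ∀ t, 0 ≤ t →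
      HasDerivAt (fun τ => u τ x) (f (u t x) - ⨍ y in Ω, f (u t y)) t)
    (t₁ : ℝ) (ht₁ : 0 ≤ t₁)
    (hinit : ∀ᵐ x ∂(volume.restrict Ω), sL ≤ u t₁ x ∧ u t₁ x ≤ sU) :
    ∀ t, t₁ ≤ t →
      ∀ᵐ x ∂(volume.restrict Ω), sL ≤ u t x ∧ u t x ≤ sU := by
  intro t₂ ht₂
  -- basic measure facts
  have hΩm : MeasurableSet Ω := hΩo.measurableSet
  have hvol_lt_top : volume Ω < ⊤ := hΩb.measure_lt_top
  set c : ℝ := (volume Ω).toReal with hc_def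
  have hc : 0 < c := ENNReal.toReal_pos hΩpos.ne' hvol_lt_top.ne
  -- constants
  set R : ℝ := max C (max |sL| |sU|) with hR_def
  have hR0 : (0:ℝ) ≤ R :=
    le_trans (abs_nonneg sL) (le_trans (le_max_left _ _) (le_max_right _ _))
  have hsLR : sL ∈ Icc (-R) R := by
    constructor
    · have : -R ≤ -|sL| := by
        have : |sL| ≤ R := le_trans (le_max_left _ _) (le_max_right _ _)
        linarith
      linarith [neg_abs_le sL]
    · exact le_trans (le_abs_self sL) (le_trans (le_max_left _ _) (le_max_right _ _))
  have hsUR : sU ∈ Icc (-R) R := by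
    constructor
    · have : |sU| ≤ R := le_trans (le_max_right _ _) (le_max_right _ _)
      linarith [neg_abs_le sU]
    · exact le_trans (le_abs_self sU) (le_trans (le_max_right _ _) (le_max_right _ _))
  have hmmemR : m ∈ Icc (-R) R := ⟨by linarith [hsLR.1], by linarith [hsUR.2]⟩
  have hMmemR : M ∈ Icc (-R) R := ⟨by linarith [hsLR.1], by linarith [hsUR.2]⟩
  have huR : ∀ t, 0 ≤ t → ∀ x ∈ Ω, u t x ∈ Icc (-R) R := by
    intro t ht x hx
    have h := hbd t ht x hx
    have hCR : C ≤ R := le_max_left _ _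
    constructor
    · linarith [abs_le.mp h |>.1]
    · linarith [abs_le.mp h |>.2]
  -- bound on |f| and |deriv f| on [-R, R]
  obtain ⟨zB, hzB, hzBmax⟩ := isCompact_Icc.exists_isMaxOn (f := fun y => |f y|)
    (Set.nonempty_Icc.2 (by linarith : -R ≤ R))
    (continuous_abs.comp hf.continuous).continuousOn
  set B : ℝ := |f zB| with hB_def
  have hB0 : 0 ≤ B := abs_nonneg _
  have hBf : ∀ y ∈ Icc (-R) R, |f y| ≤ B := fun y hy => hzBmax hy
  have hderivcont : Continuous (deriv f) := hf.continuous_deriv le_rfl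
  obtain ⟨zL, hzL, hzLmax⟩ := isCompact_Icc.exists_isMaxOn (f := fun y => |deriv f y|)
    (Set.nonempty_Icc.2 (by linarith : -R ≤ R))
    (continuous_abs.comp hderivcont).continuousOn
  set L : ℝ := |deriv f zL| with hL_def
  have hL0 : 0 ≤ L := abs_nonneg _
  have hLf : ∀ y ∈ Icc (-R) R, |deriv f y| ≤ L := fun y hy => hzLmax hy
  -- f is L-Lipschitz on [-R, R]
  have hlip : ∀ a ∈ Icc (-R) R, ∀ b ∈ Icc (-R) R, |f a - f b| ≤ L * |a - b| := by
    intro a ha b hb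
    have := (convex_Icc (-R) R).norm_image_sub_le_of_norm_hasDerivWithin_le
      (f := f) (f' := deriv f) (C := L)
      (fun y hy => ((hf.differentiable one_ne_zero) y).hasDerivAt.hasDerivWithinAt)
      (fun y hy => hLf y hy) hb ha
    simpa [Real.norm_eq_abs] using this
  -- monotonicity of f
  have hcont : Continuous f := hf.continuous
  have hanti1 : StrictAntiOn f (Iic m) :=
    strictAntiOn_of_deriv_neg (convex_Iic m) hcont.continuousOn
      (by rw [interior_Iic]; exact fun s hs => hf1 s hs)
  have hmono : StrictMonoOn f (Icc m M) :=
    strictMonoOn_of_deriv_pos (convex_Icc m M) hcont.continuousOn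
      (by rw [interior_Icc]; exact fun s hs => hf3 s hs)
  have hanti2 : StrictAntiOn f (Ici M) :=
    strictAntiOn_of_deriv_neg (convex_Ici M) hcont.continuousOn
      (by rw [interior_Ici]; exact fun s hs => hf2 s hs)
  have hfmM : f m < f M := hmono ⟨le_rfl, hmM.le⟩ ⟨hmM.le, le_rfl⟩ hmM
  -- pointwise bounds on f in terms of the distance to [sL, sU]
  have claimLo : ∀ y ∈ Icc (-R) R,
      f m - L * (max (y - sU) 0 + max (sL - y) 0) ≤ f y := by
    intro y hy
    rcases le_or_gt y sL with h1 | h1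
    · have hfy : f sL ≤ f y := by
        rcases eq_or_lt_of_le h1 with h | h
        · rw [h]
        · exact le_of_lt (hanti1 (le_of_lt (lt_trans h hsL)) hsL.le h)
      have hw : 0 ≤ max (y - sU) 0 + max (sL - y) 0 :=
        add_nonneg (le_max_right _ _) (le_max_right _ _)
      nlinarith [mul_nonneg hL0 hw, hfsL]
    rcases le_or_gt y m with h2 | h2
    · have hfy : f m ≤ f y := hanti1.antitoneOn (mem_Iic.mpr h2) (mem_Iic.mpr le_rfl) h2
      have hw : 0 ≤ max (y - sU) 0 + max (sL - y) 0 :=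
        add_nonneg (le_max_right _ _) (le_max_right _ _)
      nlinarith [mul_nonneg hL0 hw]
    rcases le_or_gt y M with h3 | h3
    · have hfy : f m ≤ f y := hmono.monotoneOn ⟨le_rfl, hmM.le⟩ ⟨h2.le, h3⟩ h2.le
      have hw : 0 ≤ max (y - sU) 0 + max (sL - y) 0 :=
        add_nonneg (le_max_right _ _) (le_max_right _ _)
      nlinarith [mul_nonneg hL0 hw]
    rcases le_or_gt y sU with h4 | h4
    · have hfy : f sU ≤ f y := hanti2.antitoneOn (mem_Ici.mpr h3.le) (mem_Ici.mpr hsU.le) h4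
      have hw : 0 ≤ max (y - sU) 0 + max (sL - y) 0 :=
        add_nonneg (le_max_right _ _) (le_max_right _ _)
      rw [hfsU] at hfy
      nlinarith [mul_nonneg hL0 hw]
    · -- y > sU : use Lipschitz bound
      have hab := hlip y hy sU hsUR
      have h8 := (abs_le.mp hab).1
      rw [abs_of_pos (by linarith : (0:ℝ) < y - sU)] at h8
      have h6 : max (y - sU) 0 = y - sU := max_eq_left (by linarith)
      have h7 : max (sL - y) 0 = 0 := max_eq_right (by linarith)
      rw [h6, h7]
      rw [hfsU] at h8
      linarith
  have claimHi : ∀ y ∈ Icc (-R) R,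
      f y ≤ f M + L * (max (y - sU) 0 + max (sL - y) 0) := by
    intro y hy
    rcases lt_or_ge y sL with h1 | h1
    · -- y < sL : use Lipschitz bound
      have hab := hlip y hy sL hsLR
      have h8 := (abs_le.mp hab).2
      rw [abs_of_neg (by linarith : y - sL < 0)] at h8
      have h6 : max (y - sU) 0 = 0 := max_eq_right (by linarith)
      have h7 : max (sL - y) 0 = sL - y := max_eq_left (by linarith)
      rw [h6, h7]
      rw [hfsL] at h8
      linarith
    have hw : 0 ≤ max (y - sU) 0 + max (sL - y) 0 :=
      add_nonneg (le_max_right _ _) (le_max_right _ _)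
    rcases le_or_gt y m with h2 | h2
    · have hfy : f y ≤ f sL := by
        rcases eq_or_lt_of_le h1 with h | h
        · rw [← h]
        · exact le_of_lt (hanti1 (mem_Iic.mpr hsL.le) (mem_Iic.mpr h2) h)
      rw [hfsL] at hfy
      nlinarith [mul_nonneg hL0 hw]
    rcases le_or_gt y M with h3 | h3
    · have hfy : f y ≤ f M := hmono.monotoneOn ⟨h2.le, h3⟩ ⟨hmM.le, le_rfl⟩ h3
      nlinarith [mul_nonneg hL0 hw]
    · have hfy : f y ≤ f M := le_of_lt (hanti2 (mem_Ici.mpr le_rfl) (mem_Ici.mpr h3.le) h3)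
      nlinarith [mul_nonneg hL0 hw]
  -- the distance function to [sL, sU]
  set w : ℝ → (Fin N → ℝ) → ℝ := fun t x => max (u t x - sU) 0 + max (sL - u t x) 0
    with hw_def
  have hw0 : ∀ t x, 0 ≤ w t x := fun t x =>
    add_nonneg (le_max_right _ _) (le_max_right _ _)
  have hum : ∀ t, Measurable (u t) := fun t =>
    hmeas.comp measurable_prodMk_left
  have hwm : ∀ t, Measurable (w t) := fun t =>
    (((hum t).sub measurable_const).max measurable_const).add
      ((measurable_const.sub (hum t)).max measurable_const)
  have hwbd : ∀ t, 0 ≤ t → ∀ x ∈ Ω, w t x ≤ 4 * R := by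
    intro t ht x hx
    obtain ⟨h1, h2⟩ := huR t ht x hx
    have := hsLR.1; have := hsUR.2
    simp only [hw_def]
    have e1 : max (u t x - sU) 0 ≤ 2 * R := max_le (by linarith [hsUR.1]) (by linarith)
    have e2 : max (sL - u t x) 0 ≤ 2 * R := max_le (by linarith [hsLR.2]) (by linarith)
    linarith
  haveI hfinΩ : IsFiniteMeasure (volume.restrict Ω) :=
    ⟨by rwa [Measure.restrict_apply_univ]⟩
  have hwint : ∀ t, 0 ≤ t → Integrable (w t) (volume.restrict Ω) := by
    intro t ht
    refine Integrable.mono' (integrable_const (4 * R)) (hwm t).aestronglyMeasurable ?_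
    rw [ae_restrict_iff' hΩm]
    filter_upwards with x hx
    rw [Real.norm_eq_abs, abs_of_nonneg (hw0 t x)]
    exact hwbd t ht x hx
  have hfuint : ∀ t, 0 ≤ t → Integrable (fun y => f (u t y)) (volume.restrict Ω) := by
    intro t ht
    refine Integrable.mono' (integrable_const B)
      (hcont.measurable.comp (hum t)).aestronglyMeasurable ?_
    rw [ae_restrict_iff' hΩm]
    filter_upwards with x hx
    rw [Real.norm_eq_abs]
    exact hBf _ (huR t ht x hx)
  -- the mean deviation E
  set E : ℝ → ℝ := fun t => ⨍ x in Ω, w t x with hE_def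
  have hEeq : ∀ t, E t = c⁻¹ * ∫ x in Ω, w t x := by
    intro t
    rw [hE_def]
    simp only [setAverage_eq, smul_eq_mul, hc_def, measureReal_def]
  have hE0 : ∀ t, 0 ≤ E t := by
    intro t
    rw [hEeq t]
    exact mul_nonneg (inv_nonneg.mpr hc.le) (setIntegral_nonneg hΩm fun x _ => hw0 t x)
  have hwt₁0 : w t₁ =ᵐ[volume.restrict Ω] 0 := by
    filter_upwards [hinit] with x hx
    have e1 : max (u t₁ x - sU) 0 = 0 := max_eq_right (by linarith [hx.2])
    have e2 : max (sL - u t₁ x) 0 = 0 := max_eq_right (by linarith [hx.1])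
    simp only [hw_def, e1, e2, add_zero, Pi.zero_apply]
  have hEt₁ : E t₁ = 0 := by
    rw [hEeq t₁, integral_congr_ae hwt₁0]
    simp
  -- the nonlocal term φ
  set φ : ℝ → ℝ := fun t => ⨍ y in Ω, f (u t y) with hφ_def
  have hφeq : ∀ t, φ t = c⁻¹ * ∫ y in Ω, f (u t y) := by
    intro t
    rw [hφ_def]
    simp only [setAverage_eq, smul_eq_mul, hc_def, measureReal_def]
  have hode' : ∀ x ∈ Ω, ∀ t, 0 ≤ t →
      HasDerivAt (fun τ => u τ x) (f (u t x) - φ t) t := hode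
  have hφabs : ∀ t, 0 ≤ t → |φ t| ≤ B := by
    intro t ht
    rw [hφeq t, abs_mul, abs_of_nonneg (inv_nonneg.mpr hc.le)]
    have h1 : ‖∫ y in Ω, f (u t y)‖ ≤ B * c := by
      refine norm_setIntegral_le_of_norm_le_const hvol_lt_top (fun y hy => ?_)
      · rw [Real.norm_eq_abs]; exact hBf _ (huR t ht y hy)
    rw [Real.norm_eq_abs] at h1
    calc c⁻¹ * |∫ y in Ω, f (u t y)| ≤ c⁻¹ * (B * c) := by
          exact mul_le_mul_of_nonneg_left h1 (inv_nonneg.mpr hc.le)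
      _ = B := by field_simp
  have hφlo : ∀ s, 0 ≤ s → f m - L * E s ≤ φ s := by
    intro s hs
    have h1 : ∫ y in Ω, (f m - L * w s y) ≤ ∫ y in Ω, f (u s y) :=
      setIntegral_mono_on ((integrable_const (f m)).sub ((hwint s hs).const_mul L))
        (hfuint s hs) hΩm (fun y hy => claimLo _ (huR s hs y hy))
    have h2 : ∫ y in Ω, (f m - L * w s y) = f m * c - L * ∫ y in Ω, w s y := by
      rw [integral_sub (integrable_const (f m)) ((hwint s hs).const_mul L),
        integral_const_mul, setIntegral_const, smul_eq_mul, measureReal_def, ← hc_def]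
      ring
    rw [h2] at h1
    have h3 : c⁻¹ * (f m * c - L * ∫ y in Ω, w s y) ≤ φ s := by
      rw [hφeq s]
      exact mul_le_mul_of_nonneg_left h1 (inv_nonneg.mpr hc.le)
    have h4 : c⁻¹ * (f m * c - L * ∫ y in Ω, w s y) = f m - L * E s := by
      rw [hEeq s]
      field_simp
    linarith
  have hφhi : ∀ s, 0 ≤ s → φ s ≤ f M + L * E s := by
    intro s hs
    have h1 : ∫ y in Ω, f (u s y) ≤ ∫ y in Ω, (f M + L * w s y) :=
      setIntegral_mono_on (hfuint s hs)
        ((integrable_const (f M)).add ((hwint s hs).const_mul L))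
        hΩm (fun y hy => claimHi _ (huR s hs y hy))
    have h2 : ∫ y in Ω, (f M + L * w s y) = f M * c + L * ∫ y in Ω, w s y := by
      rw [integral_add (integrable_const (f M)) ((hwint s hs).const_mul L),
        integral_const_mul, setIntegral_const, smul_eq_mul, measureReal_def, ← hc_def]
      ring
    rw [h2] at h1
    have h3 : φ s ≤ c⁻¹ * (f M * c + L * ∫ y in Ω, w s y) := by
      rw [hφeq s]
      exact mul_le_mul_of_nonneg_left h1 (inv_nonneg.mpr hc.le)
    have h4 : c⁻¹ * (f M * c + L * ∫ y in Ω, w s y) = f M + L * E s := by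
      rw [hEeq s]
      field_simp
    linarith
  -- Lipschitz estimates in time
  have hulip : ∀ x ∈ Ω, ∀ p ∈ Ici (0:ℝ), ∀ q ∈ Ici (0:ℝ),
      |u p x - u q x| ≤ (B + B) * |p - q| := by
    intro x hx p hp q hq
    have := (convex_Ici (0:ℝ)).norm_image_sub_le_of_norm_hasDerivWithin_le
      (f := fun τ => u τ x) (f' := fun t => f (u t x) - φ t) (C := B + B)
      (fun t ht => (hode' x hx t ht).hasDerivWithinAt)
      (fun t ht => by
        rw [Real.norm_eq_abs]
        have h1 : |f (u t x)| ≤ B := hBf _ (huR t ht x hx)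
        have h2 : |φ t| ≤ B := hφabs t ht
        calc |f (u t x) - φ t| ≤ |f (u t x)| + |φ t| := abs_sub _ _
          _ ≤ B + B := add_le_add h1 h2)
      hq hp
    simpa [Real.norm_eq_abs] using this
  have hwlip : ∀ x ∈ Ω, ∀ p ∈ Ici (0:ℝ), ∀ q ∈ Ici (0:ℝ),
      |w p x - w q x| ≤ (2 * (B + B)) * |p - q| := by
    intro x hx p hp q hq
    have h1 : |max (u p x - sU) 0 - max (u q x - sU) 0| ≤ |u p x - u q x| := by
      have := abs_max_sub_max_le_abs (u p x - sU) (u q x - sU) 0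
      simpa using this
    have h2 : |max (sL - u p x) 0 - max (sL - u q x) 0| ≤ |u p x - u q x| := by
      have := abs_max_sub_max_le_abs (sL - u p x) (sL - u q x) 0
      have e : |(sL - u p x) - (sL - u q x)| = |u p x - u q x| := by
        rw [← abs_neg]; ring_nf
      rw [e] at this
      exact this
    have h3 := hulip x hx p hp q hq
    have h4 : w p x - w q x =
        (max (u p x - sU) 0 - max (u q x - sU) 0) +
        (max (sL - u p x) 0 - max (sL - u q x) 0) := by
      simp only [hw_def]; ring
    calc |w p x - w q x| ≤ |max (u p x - sU) 0 - max (u q x - sU) 0| +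
          |max (sL - u p x) 0 - max (sL - u q x) 0| := by
          rw [h4]; exact abs_add_le _ _
      _ ≤ |u p x - u q x| + |u p x - u q x| := add_le_add h1 h2
      _ ≤ (B + B) * |p - q| + (B + B) * |p - q| := add_le_add h3 h3
      _ = (2 * (B + B)) * |p - q| := by ring
  have hwcont : ∀ x ∈ Ω, ContinuousOn (fun s => w s x) (Ici (0:ℝ)) := by
    intro x hx
    have : LipschitzOnWith (Real.toNNReal (2 * (B + B))) (fun s => w s x) (Ici (0:ℝ)) := by
      rw [lipschitzOnWith_iff_dist_le_mul]
      intro p hp q hq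
      rw [Real.dist_eq, Real.dist_eq]
      calc |w p x - w q x| ≤ (2 * (B + B)) * |p - q| := hwlip x hx p hp q hq
        _ = (Real.toNNReal (2 * (B + B))) * |p - q| := by
            rw [Real.coe_toNNReal _ (by positivity)]
    exact this.continuousOn
  have hElip : ∀ p ∈ Ici (0:ℝ), ∀ q ∈ Ici (0:ℝ),
      |E p - E q| ≤ (2 * (B + B)) * |p - q| := by
    intro p hp q hq
    have h1 : E p - E q = c⁻¹ * ∫ x in Ω, (w p x - w q x) := by
      rw [hEeq p, hEeq q, ← mul_sub,
        integral_sub (hwint p hp) (hwint q hq)]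
    have h2 : ‖∫ x in Ω, (w p x - w q x)‖ ≤ ((2 * (B + B)) * |p - q|) * c := by
      refine norm_setIntegral_le_of_norm_le_const hvol_lt_top (fun x hx => ?_)
      · rw [Real.norm_eq_abs]; exact hwlip x hx p hp q hq
    rw [Real.norm_eq_abs] at h2
    rw [h1, abs_mul, abs_of_nonneg (inv_nonneg.mpr hc.le)]
    calc c⁻¹ * |∫ x in Ω, (w p x - w q x)| ≤ c⁻¹ * (((2 * (B + B)) * |p - q|) * c) :=
          mul_le_mul_of_nonneg_left h2 (inv_nonneg.mpr hc.le)
      _ = (2 * (B + B)) * |p - q| := by field_simp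
  have hEcont : ContinuousOn E (Ici (0:ℝ)) := by
    have : LipschitzOnWith (Real.toNNReal (2 * (B + B))) E (Ici (0:ℝ)) := by
      rw [lipschitzOnWith_iff_dist_le_mul]
      intro p hp q hq
      rw [Real.dist_eq, Real.dist_eq]
      calc |E p - E q| ≤ (2 * (B + B)) * |p - q| := hElip p hp q hq
        _ = (Real.toNNReal (2 * (B + B))) * |p - q| := by
            rw [Real.coe_toNNReal _ (by positivity)]
    exact this.continuousOn
  -- the primitive of E
  set F : ℝ → ℝ := fun s => ∫ σ in t₁..s, E σ with hF_def
  have hFt₁ : F t₁ = 0 := intervalIntegral.integral_same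
  have hEii : ∀ s, t₁ ≤ s → IntervalIntegrable E volume t₁ s := by
    intro s hs
    apply ContinuousOn.intervalIntegrable
    apply hEcont.mono
    rw [uIcc_of_le hs]
    exact fun z hz => le_trans ht₁ hz.1
  have hFderiv : ∀ s, t₁ ≤ s → HasDerivWithinAt F (E s) (Ici s) s := by
    intro s hs
    have h0s : (0:ℝ) ≤ s := le_trans ht₁ hs
    have hsub : Ioi s ⊆ Ici (0:ℝ) := fun z hz => le_trans h0s (le_of_lt hz)
    refine intervalIntegral.integral_hasDerivWithinAt_right (hEii s hs)
      ⟨Ioi s, self_mem_nhdsWithin, ?_⟩ ?_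
    · exact ((hEcont.mono hsub)).aestronglyMeasurable measurableSet_Ioi
    · exact (hEcont s h0s).mono hsub
  have hFcont : ContinuousOn F (Icc t₁ t₂) := by
    have h_int : IntegrableOn E (uIcc t₁ t₂) volume := by
      rw [uIcc_of_le ht₂]
      exact (hEcont.mono (fun z hz => le_trans ht₁ hz.1 : Icc t₁ t₂ ⊆ Ici 0)).integrableOn_compact isCompact_Icc
    have := intervalIntegral.continuousOn_primitive_interval h_int
    rwa [uIcc_of_le ht₂] at this
  -- the per-point comparison
  have key : ∀ x ∈ Ω, ∀ s ∈ Icc t₁ t₂, w s x ≤ w t₁ x + L * F s := by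
    intro x hx
    refine image_le_of_liminf_slope_right_le_deriv_boundary
      (f := fun s => w s x) (B := fun s => w t₁ x + L * F s) (B' := fun s => L * E s)
      ?_ ?_ ?_ ?_ ?_
    · exact (hwcont x hx).mono (fun z hz => le_trans ht₁ hz.1)
    · simp [hFt₁]
    · exact continuousOn_const.add (continuousOn_const.mul hFcont)
    · intro s hs
      exact ((hFderiv s hs.1).const_mul L).const_add (w t₁ x)
    · -- the slope bound
      intro s hs r hr
      have h0s : (0:ℝ) ≤ s := le_trans ht₁ hs.1
      have hr0 : 0 < r := lt_of_le_of_lt (mul_nonneg hL0 (hE0 s)) hr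
      have hLE : L * E s < r := hr
      have hD := hode' x hx s h0s
      have hvcont : ContinuousAt (fun τ => u τ x) s := hD.continuousAt
      have hslope : Tendsto (slope (fun τ => u τ x) s) (𝓝[>] s)
          (𝓝 (f (u s x) - φ s)) := by
        refine (hasDerivAt_iff_tendsto_slope.mp hD).mono_left (nhdsWithin_mono _ ?_)
        exact fun z hz => Set.mem_compl_singleton_iff.mpr (ne_of_gt hz)
      rcases lt_or_ge (u s x) sU with husU | husU
      · rcases lt_or_ge sL (u s x) with hsLu | hsLu
        · -- interior case : w vanishes near s
          apply Eventually.frequently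
          have hev : ∀ᶠ z in 𝓝 s, u z x ∈ Ioo sL sU :=
            hvcont.preimage_mem_nhds (Ioo_mem_nhds hsLu husU)
          filter_upwards [hev.filter_mono nhdsWithin_le_nhds, self_mem_nhdsWithin]
            with z hz hz'
          have e1 : w z x = 0 := by
            have a1 : max (u z x - sU) 0 = 0 := max_eq_right (by linarith [hz.2])
            have a2 : max (sL - u z x) 0 = 0 := max_eq_right (by linarith [hz.1])
            simp only [hw_def, a1, a2, add_zero]
          have e2 : w s x = 0 := by
            have a1 : max (u s x - sU) 0 = 0 := max_eq_right (by linarith)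
            have a2 : max (sL - u s x) 0 = 0 := max_eq_right (by linarith)
            simp only [hw_def, a1, a2, add_zero]
          rw [slope_def_field, e1, e2]
          simpa using hr0
        · -- lower case : u s x ≤ sL
          have hfv : f M ≤ f (u s x) := by
            rw [← hfsL]
            rcases eq_or_lt_of_le hsLu with h | h
            · rw [h]
            · exact le_of_lt (hanti1 (mem_Iic.mpr (by linarith)) (mem_Iic.mpr hsL.le) h)
          have hDlt : -(f (u s x) - φ s) < r := by
            have := hφhi s h0s
            have hEs := hE0 s
            nlinarith
          have hev1 : ∀ᶠ z in 𝓝[>] s, -(slope (fun τ => u τ x) s z) < r :=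
            (hslope.neg.eventually_lt_const hDlt)
          have hev2 : ∀ᶠ z in 𝓝[>] s, u z x < sU := by
            refine Eventually.filter_mono nhdsWithin_le_nhds ?_
            exact hvcont.eventually_lt_const (by linarith)
          apply Eventually.frequently
          filter_upwards [hev1, hev2, self_mem_nhdsWithin] with z h1 h2 hzs
          have hzs' : s < z := hzs
          have hws : w s x = sL - u s x := by
            have a1 : max (u s x - sU) 0 = 0 := max_eq_right (by linarith)
            have a2 : max (sL - u s x) 0 = sL - u s x := max_eq_left (by linarith)
            simp only [hw_def, a1, a2, zero_add]
          have hwz : w z x = max (sL - u z x) 0 := by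
            have a1 : max (u z x - sU) 0 = 0 := max_eq_right (by linarith)
            simp only [hw_def, a1, zero_add]
          have hkey : w z x - w s x ≤ max (u s x - u z x) 0 := by
            rw [hws, hwz]
            have : max (sL - u z x) 0 - (sL - u s x)
                = max ((sL - u z x) - (sL - u s x)) (0 - (sL - u s x)) := by
              rw [max_sub_sub_right]
            rw [this]
            refine max_le_max (by ring_nf; exact le_rfl) (by linarith)
          rw [slope_def_field]
          rw [slope_def_field] at h1
          have hpos : 0 < z - s := by linarith
          calc (w z x - w s x) / (z - s) ≤ max (u s x - u z x) 0 / (z - s) := by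
                exact (div_le_div_iff_of_pos_right hpos).mpr hkey
            _ = max ((u s x - u z x) / (z - s)) 0 := by
                rw [← max_div_div_right hpos.le, zero_div]
            _ < r := by
                refine max_lt ?_ hr0
                have : (u s x - u z x) / (z - s) = -((u z x - u s x)/(z - s)) := by ring
                rw [this]
                exact h1
      · -- upper case : sU ≤ u s x
        have hfv : f (u s x) ≤ f m := by
          rw [← hfsU]
          rcases eq_or_lt_of_le husU with h | h
          · rw [← h]
          · exact le_of_lt (hanti2 (mem_Ici.mpr (by linarith)) (mem_Ici.mpr (by linarith)) h)
        have hDlt : f (u s x) - φ s < r := by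
          have := hφlo s h0s
          have hEs := hE0 s
          nlinarith
        have hev1 : ∀ᶠ z in 𝓝[>] s, slope (fun τ => u τ x) s z < r :=
          hslope.eventually_lt_const hDlt
        have hev2 : ∀ᶠ z in 𝓝[>] s, sL < u z x := by
          refine Eventually.filter_mono nhdsWithin_le_nhds ?_
          exact hvcont.eventually_const_lt (by linarith)
        apply Eventually.frequently
        filter_upwards [hev1, hev2, self_mem_nhdsWithin] with z h1 h2 hzs
        have hzs' : s < z := hzs
        have hws : w s x = u s x - sU := by
          have a1 : max (u s x - sU) 0 = u s x - sU := max_eq_left (by linarith)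
          have a2 : max (sL - u s x) 0 = 0 := max_eq_right (by linarith)
          simp only [hw_def, a1, a2, add_zero]
        have hwz : w z x = max (u z x - sU) 0 := by
          have a2 : max (sL - u z x) 0 = 0 := max_eq_right (by linarith)
          simp only [hw_def, a2, add_zero]
        have hkey : w z x - w s x ≤ max (u z x - u s x) 0 := by
          rw [hws, hwz]
          have : max (u z x - sU) 0 - (u s x - sU)
              = max ((u z x - sU) - (u s x - sU)) (0 - (u s x - sU)) := by
            rw [max_sub_sub_right]
          rw [this]
          refine max_le_max (by ring_nf; exact le_rfl) (by linarith)
        rw [slope_def_field]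
        rw [slope_def_field] at h1
        have hpos : 0 < z - s := by linarith
        calc (w z x - w s x) / (z - s) ≤ max (u z x - u s x) 0 / (z - s) := by
              exact (div_le_div_iff_of_pos_right hpos).mpr hkey
          _ = max ((u z x - u s x) / (z - s)) 0 := by
              rw [← max_div_div_right hpos.le, zero_div]
          _ < r := max_lt h1 hr0
  -- integrate the comparison over Ω
  have hEF : ∀ s ∈ Icc t₁ t₂, E s ≤ L * F s := by
    intro s hs
    have h0s : (0:ℝ) ≤ s := le_trans ht₁ hs.1
    have h1 : ∫ x in Ω, w s x ≤ ∫ x in Ω, (w t₁ x + L * F s) :=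
      setIntegral_mono_on (hwint s h0s)
        ((hwint t₁ ht₁).add (integrable_const _)) hΩm
        (fun x hx => key x hx s hs)
    have h2 : ∫ x in Ω, (w t₁ x + L * F s) = (∫ x in Ω, w t₁ x) + (L * F s) * c := by
      rw [integral_add (hwint t₁ ht₁) (integrable_const _), setIntegral_const,
        smul_eq_mul, measureReal_def, ← hc_def, mul_comm]
    have h3 : ∫ x in Ω, w t₁ x = 0 := by
      rw [integral_congr_ae hwt₁0]; simp
    rw [h2, h3, zero_add] at h1
    rw [hEeq s]
    calc c⁻¹ * ∫ x in Ω, w s x ≤ c⁻¹ * ((L * F s) * c) :=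
          mul_le_mul_of_nonneg_left h1 (inv_nonneg.mpr hc.le)
      _ = L * F s := by field_simp
  -- Gronwall for the primitive F
  have hFle : ∀ s ∈ Icc t₁ t₂, F s ≤ 0 := by
    have hg := le_gronwallBound_of_liminf_deriv_right_le (f := F) (f' := E)
      (δ := 0) (K := L) (ε := 0) (a := t₁) (b := t₂) hFcont ?_ (le_of_eq hFt₁) ?_
    · intro s hs
      have := hg s hs
      rwa [gronwallBound_ε0_δ0] at this
    · intro s hs r hr
      have hDW := hFderiv s hs.1
      have hslope : Tendsto (slope F s) (𝓝[>] s) (𝓝 (E s)) := by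
        have := hasDerivWithinAt_iff_tendsto_slope.mp hDW
        refine this.mono_left (nhdsWithin_mono _ ?_)
        intro z hz
        exact ⟨mem_Ici.mpr (le_of_lt (mem_Ioi.mp hz)), ne_of_gt (mem_Ioi.mp hz)⟩
      apply Eventually.frequently
      filter_upwards [hslope.eventually_lt_const hr] with z hz
      rwa [slope_def_field, div_eq_inv_mul] at hz
    · intro s hs
      rw [mul_comm L (F s)] at *
      have := hEF s (Ico_subset_Icc_self hs)
      linarith [this]
  -- conclude : E t₂ = 0, hence w t₂ = 0 a.e.
  have hEt₂ : E t₂ = 0 := by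
    have h1 := hEF t₂ ⟨ht₂, le_rfl⟩
    have h2 := hFle t₂ ⟨ht₂, le_rfl⟩
    have h3 := hE0 t₂
    nlinarith
  have h0t₂ : (0:ℝ) ≤ t₂ := le_trans ht₁ ht₂
  have hI : ∫ x in Ω, w t₂ x = 0 := by
    rw [hEeq t₂] at hEt₂
    have := mul_eq_zero.mp hEt₂
    rcases this with h | h
    · exact absurd h (by positivity)
    · exact h
  have hae : w t₂ =ᵐ[volume.restrict Ω] 0 := by
    have := (integral_eq_zero_iff_of_nonneg (fun x => hw0 t₂ x) (hwint t₂ h0t₂)).mp hI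
    exact this
  filter_upwards [hae] with x hx
  have h1 : max (u t₂ x - sU) 0 + max (sL - u t₂ x) 0 = 0 := hx
  have h2 : (0:ℝ) ≤ max (u t₂ x - sU) 0 := le_max_right _ _
  have h3 : (0:ℝ) ≤ max (sL - u t₂ x) 0 := le_max_right _ _
  have h4 : u t₂ x - sU ≤ 0 := by
    have := le_max_left (u t₂ x - sU) 0
    linarith
  have h5 : sL - u t₂ x ≤ 0 := by
    have := le_max_left (sL - u t₂ x) 0
    linarith
  exact ⟨by linarith, by linarith⟩
end

section
/- Let f ∈ C^1(ℝ) be bistable (f' < 0 on (-∞,m)∪(M,∞), f' > 0 on (m,M)) with s_* < m < M < s^*, f(s_*) = f(M), f(s^*) = f(m). Let u solve u_t = f(u) - ⟨f(u)⟩ with s_* ≤ u(·,0) ≤ s^* a.e., and set λ(t) = ⟨f(u(t))⟩. Then f(m) ≤ λ(t) ≤ f(M) for all t ≥ 0, and consequently for each x (with Y(t) = Y(t;u_0(x)) the characteristic ODE solution): if Y(t_0) ≤ m then Y(t) ≤ m for all t ≥ t_0, and if Y(t_0) ≥ M then Y(t) ≥ M for all t ≥ t_0. -/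
open Set Filter Topology MeasureTheory

/-- One-sided comparison principle for scalar ODEs. -/
theorem stmt15_comp {Y W g w : ℝ → ℝ} {K t₀ t₁ : ℝ} (ht : t₀ ≤ t₁)
    (hY : ∀ t ∈ Set.Icc t₀ t₁, HasDerivAt Y (g t) t)
    (hW : ∀ t ∈ Set.Icc t₀ t₁, HasDerivAt W (w t) t)
    (hcmp : ∀ t ∈ Set.Ioo t₀ t₁, W t < Y t → g t - w t ≤ K * (Y t - W t))
    (h0 : Y t₀ ≤ W t₀) : Y t₁ ≤ W t₁ := by
  by_contra hc
  push_neg at hc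
  set D : ℝ → ℝ := fun t => Y t - W t with hDdef
  have hDd : ∀ t ∈ Set.Icc t₀ t₁, HasDerivAt D (g t - w t) t :=
    fun t ht' => (hY t ht').sub (hW t ht')
  have hDc : ContinuousOn D (Set.Icc t₀ t₁) :=
    fun t ht' => (hDd t ht').continuousAt.continuousWithinAt
  set S : Set ℝ := Set.Icc t₀ t₁ ∩ D ⁻¹' Set.Iic 0 with hSdef
  have hSne : S.Nonempty := ⟨t₀, ⟨le_rfl, ht⟩, by simpa [D] using sub_nonpos.2 h0⟩
  have hSbd : BddAbove S := BddAbove.mono Set.inter_subset_left bddAbove_Icc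
  have hScl : IsClosed S := hDc.preimage_isClosed_of_isClosed isClosed_Icc isClosed_Iic
  set τ := sSup S with hτdef
  have hτS : τ ∈ S := hScl.csSup_mem hSne hSbd
  have hτI : τ ∈ Set.Icc t₀ t₁ := hτS.1
  have hDτ : D τ ≤ 0 := hτS.2
  have hDt₁ : 0 < D t₁ := sub_pos.2 hc
  have hτlt : τ < t₁ := lt_of_le_of_ne hτI.2 (fun h => by rw [h] at hDτ; linarith)
  have hpos : ∀ s ∈ Set.Ioc τ t₁, 0 < D s := by
    intro s hs
    by_contra hns
    push_neg at hns
    have hmem : s ∈ S := ⟨⟨hτI.1.trans hs.1.le, hs.2⟩, hns⟩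
    exact absurd (le_csSup hSbd hmem) (not_le.2 hs.1)
  set F : ℝ → ℝ := fun t => D t * Real.exp (-K * t) with hFdef
  have hFd : ∀ t ∈ Set.Ioo τ t₁, HasDerivAt F
      ((g t - w t) * Real.exp (-K * t) + D t * (-K * Real.exp (-K * t))) t := by
    intro t ht'
    have h1 : HasDerivAt (fun s : ℝ => Real.exp (-K * s)) (-K * Real.exp (-K * t)) t := by
      have := ((hasDerivAt_id t).const_mul (-K)).exp
      simpa [mul_comm] using this
    exact (hDd t ⟨hτI.1.trans ht'.1.le, ht'.2.le⟩).mul h1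
  have hanti : AntitoneOn F (Set.Icc τ t₁) := by
    apply antitoneOn_of_deriv_nonpos (convex_Icc τ t₁)
    · exact ContinuousOn.mul (hDc.mono (Set.Icc_subset_Icc hτI.1 le_rfl))
        ((Real.continuous_exp.comp (continuous_const.mul continuous_id)).continuousOn)
    · rw [interior_Icc]
      exact fun t ht' => ((hFd t ht').differentiableAt).differentiableWithinAt
    · rw [interior_Icc]
      intro t ht'
      rw [(hFd t ht').deriv]
      have h2 : g t - w t ≤ K * D t :=
        hcmp t ⟨hτI.1.trans_lt ht'.1, ht'.2⟩ (sub_pos.1 (hpos t ⟨ht'.1, ht'.2.le⟩))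
      have h3 : (0:ℝ) < Real.exp (-K * t) := Real.exp_pos _
      nlinarith
  have hF1 := hanti (Set.left_mem_Icc.2 hτlt.le) (Set.right_mem_Icc.2 hτlt.le) hτlt.le
  have hFτ : F τ ≤ 0 := by
    have := Real.exp_pos (-K * τ)
    simp only [hFdef]
    nlinarith
  have hFt₁ : 0 < F t₁ := mul_pos hDt₁ (Real.exp_pos _)
  linarith

/-- A Lipschitz bound for a `C¹` function on a compact interval. -/
theorem stmt15_lip {f : ℝ → ℝ} (hf : ContDiff ℝ 1 f) (R : ℝ) :
    ∃ K : ℝ, 0 < K ∧ ∀ a ∈ Set.Icc (-R) R, ∀ b ∈ Set.Icc (-R) R,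
      |f a - f b| ≤ K * |a - b| := by
  obtain ⟨K₀, hK₀⟩ := isCompact_Icc.exists_bound_of_continuousOn
    ((hf.continuous_deriv le_rfl).continuousOn (s := Set.Icc (-R) R))
  refine ⟨|K₀| + 1, by positivity, fun a ha b hb => ?_⟩
  have h := Convex.norm_image_sub_le_of_norm_deriv_le (C := |K₀| + 1)
    (fun x _ => hf.differentiable one_ne_zero x)
    (fun x hx => (hK₀ x hx).trans (le_trans (le_abs_self _) (by linarith)))
    (convex_Icc (-R) R) hb ha
  simpa [Real.norm_eq_abs] using h

/-- For a bistable `f` and a solution with `s_* ≤ u₀ ≤ s^*` a.e., the nonlocal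
term `λ(t) = ⟨f(u(t))⟩` satisfies `f(m) ≤ λ(t) ≤ f(M)`; consequently, for any
characteristic `Y' = f(Y) - λ(t)`, the regions `{Y ≤ m}` and `{Y ≥ M}` are
forward invariant. -/
theorem stmt15 {N : ℕ} (Ω : Set (Fin N → ℝ)) (hΩo : IsOpen Ω)
    (hΩb : Bornology.IsBounded Ω) (hΩpos : 0 < volume Ω)
    (f : ℝ → ℝ) (hf : ContDiff ℝ 1 f)
    (m M : ℝ) (hmM : m < M)
    (hf1 : ∀ s, s < m → deriv f s < 0) (hf2 : ∀ s, M < s → deriv f s < 0)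
    (hf3 : ∀ s ∈ Ioo m M, 0 < deriv f s)
    (sL sU : ℝ) (hsL : sL < m) (hsU : M < sU)
    (hfsL : f sL = f M) (hfsU : f sU = f m)
    (u : ℝ → (Fin N → ℝ) → ℝ)
    (hmeas : Measurable (Function.uncurry u))
    (C : ℝ) (hbd : ∀ t : ℝ, 0 ≤ t → ∀ x ∈ Ω, |u t x| ≤ C)
    (hode : ∀ x ∈ Ω, ∀ t : ℝ, 0 ≤ t →
      HasDerivAt (fun τ => u τ x) (f (u t x) - ⨍ y in Ω, f (u t y)) t)
    (hinit : ∀ᵐ x ∂(volume.restrict Ω), sL ≤ u 0 x ∧ u 0 x ≤ sU) :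
    (∀ t : ℝ, 0 ≤ t →
      f m ≤ (⨍ y in Ω, f (u t y)) ∧ (⨍ y in Ω, f (u t y)) ≤ f M) ∧
    (∀ Y : ℝ → ℝ,
      (∀ t : ℝ, 0 ≤ t →
        HasDerivAt Y (f (Y t) - ⨍ y in Ω, f (u t y)) t) →
      ∀ t₀ : ℝ, 0 ≤ t₀ →
        ((Y t₀ ≤ m → ∀ t, t₀ ≤ t → Y t ≤ m) ∧
         (M ≤ Y t₀ → ∀ t, t₀ ≤ t → M ≤ Y t))) := by
  classical
  have ΩM : MeasurableSet Ω := hΩo.measurableSet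
  have hμ0 : volume Ω ≠ 0 := hΩpos.ne'
  have hμfin : volume Ω ≠ ⊤ := hΩb.measure_lt_top.ne
  have hcont : Continuous f := hf.continuous
  -- monotonicity structure of `f`
  have hanti1 : StrictAntiOn f (Iic m) := by
    apply strictAntiOn_of_deriv_neg (convex_Iic m) hcont.continuousOn
    intro x hx
    rw [interior_Iic] at hx
    exact hf1 x hx
  have hmono : StrictMonoOn f (Icc m M) := by
    apply strictMonoOn_of_deriv_pos (convex_Icc m M) hcont.continuousOn
    intro x hx
    rw [interior_Icc] at hx
    exact hf3 x hx
  have hanti2 : StrictAntiOn f (Ici M) := by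
    apply strictAntiOn_of_deriv_neg (convex_Ici M) hcont.continuousOn
    intro x hx
    rw [interior_Ici] at hx
    exact hf2 x hx
  have hfmM : f m ≤ f M := hmono.monotoneOn ⟨le_rfl, hmM.le⟩ ⟨hmM.le, le_rfl⟩ hmM.le
  have hsLsU : sL < sU := by linarith
  have hrange : ∀ y ∈ Icc sL sU, f m ≤ f y ∧ f y ≤ f M := by
    intro y hy
    rcases le_total y m with h1 | h1
    · refine ⟨hanti1.antitoneOn (mem_Iic.2 h1) (mem_Iic.2 le_rfl) h1, ?_⟩
      calc f y ≤ f sL := hanti1.antitoneOn (mem_Iic.2 hsL.le) (mem_Iic.2 h1) hy.1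
        _ = f M := hfsL
    · rcases le_total y M with h2 | h2
      · exact ⟨hmono.monotoneOn ⟨le_rfl, hmM.le⟩ ⟨h1, h2⟩ h1,
          hmono.monotoneOn ⟨h1, h2⟩ ⟨hmM.le, le_rfl⟩ h2⟩
      · refine ⟨?_, hanti2.antitoneOn (mem_Ici.2 le_rfl) (mem_Ici.2 h2) h2⟩
        calc f m = f sU := hfsU.symm
          _ ≤ f y := hanti2.antitoneOn (mem_Ici.2 h2) (mem_Ici.2 hsU.le) hy.2
  -- a compact interval containing all relevant values
  set Cb : ℝ := |C| + |sL| + |sU| with hCbdef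
  have hCb0 : 0 ≤ Cb := by positivity
  have hsLC : sL ∈ Icc (-Cb) Cb := by
    constructor
    · simp only [hCbdef]; linarith [neg_abs_le sL, abs_nonneg C, abs_nonneg sU]
    · simp only [hCbdef]; linarith [le_abs_self sL, abs_nonneg C, abs_nonneg sU]
  have hsUC : sU ∈ Icc (-Cb) Cb := by
    constructor
    · simp only [hCbdef]; linarith [neg_abs_le sU, abs_nonneg C, abs_nonneg sL]
    · simp only [hCbdef]; linarith [le_abs_self sU, abs_nonneg C, abs_nonneg sL]
  have memIcc : ∀ (t : ℝ) (x : Fin N → ℝ), 0 ≤ t → x ∈ Ω → u t x ∈ Icc (-Cb) Cb := by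
    intro t x ht hx
    have h := hbd t ht x hx
    have h2 : |u t x| ≤ Cb := h.trans
      (by simp only [hCbdef]; linarith [le_abs_self C, abs_nonneg sL, abs_nonneg sU])
    exact abs_le.mp h2
  obtain ⟨K, hK, hlip⟩ := stmt15_lip hf Cb
  obtain ⟨F₀, hF₀⟩ := isCompact_Icc.exists_bound_of_continuousOn
    (hcont.continuousOn (s := Icc (-Cb) Cb))
  have hF₀0 : 0 ≤ F₀ := le_trans (norm_nonneg _) (hF₀ Cb ⟨neg_le_self hCb0, le_rfl⟩)
  have hmeasf : ∀ t : ℝ, Measurable fun y => f (u t y) :=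
    fun t => hcont.measurable.comp (hmeas.comp measurable_prodMk_left)
  have hint : ∀ t : ℝ, 0 ≤ t → IntegrableOn (fun y => f (u t y)) Ω volume := by
    intro t ht
    refine Integrable.mono' (g := fun _ => F₀) ?_ (hmeasf t).aestronglyMeasurable ?_
    · exact integrableOn_const hΩb.measure_lt_top.ne
    · filter_upwards [ae_restrict_mem ΩM] with x hx
      exact hF₀ _ (memIcc t x ht hx)
  have havg : ∀ (t a b : ℝ), 0 ≤ t → a ≤ b →
      (∀ᵐ x ∂(volume.restrict Ω), f (u t x) ∈ Icc a b) →
      (⨍ y in Ω, f (u t y)) ∈ Icc a b := fun t a b ht _ hae =>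
    (convex_Icc a b).set_average_mem isClosed_Icc hμ0 hμfin hae (hint t ht)
  have hlamb : ∀ t : ℝ, 0 ≤ t → (⨍ y in Ω, f (u t y)) ∈ Icc (-F₀) F₀ := by
    intro t ht
    refine havg t _ _ ht (by linarith) ?_
    filter_upwards [ae_restrict_mem ΩM] with x hx
    have h := hF₀ _ (memIcc t x ht hx)
    rw [Real.norm_eq_abs] at h
    exact abs_le.mp h
  -- the time step
  set h₀ : ℝ := Real.log (3 / 2) / K with hh₀def
  have hstep : 0 < h₀ := div_pos (Real.log_pos (by norm_num)) hK
  have hexp : Real.exp (K * h₀) = 3 / 2 := by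
    rw [hh₀def, mul_comm, div_mul_cancel₀ _ hK.ne']
    exact Real.exp_log (by norm_num)
  -- trajectory estimate on a window
  have key : ∀ a : ℝ, 0 ≤ a →
      (∀ r, r ∈ Icc 0 a → f m ≤ (⨍ y in Ω, f (u r y)) ∧ (⨍ y in Ω, f (u r y)) ≤ f M) →
      ∀ S : ℝ, 0 ≤ S → ∀ t : ℝ, a < t → t ≤ a + h₀ →
      (∀ r, r ∈ Ioo a t → f m - S ≤ (⨍ y in Ω, f (u r y)) ∧ (⨍ y in Ω, f (u r y)) ≤ f M + S) →
      ∀ x ∈ Ω, sL ≤ u 0 x → u 0 x ≤ sU →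
      sL - S / (2 * K) ≤ u t x ∧ u t x ≤ sU + S / (2 * K) := by
    intro a ha hIH S hS t hat hth hlamS x hx hx0L hx0U
    have hY : ∀ r : ℝ, 0 ≤ r → HasDerivAt (fun τ => u τ x)
        (f (u r x) - ⨍ y in Ω, f (u r y)) r := hode x hx
    -- Phase 1 : invariance of `[sL, sU]` on `[0, a]`
    have hup : u a x ≤ sU := by
      refine stmt15_comp (W := fun _ => sU) (w := fun _ => 0) (K := K) ha
        (fun s hs => hY s hs.1) (fun s _ => hasDerivAt_const _ _) ?_ hx0U
      intro s hs hlt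
      have h1 := (hIH s ⟨hs.1.le, hs.2.le⟩).1
      have h2 : f (u s x) - f sU ≤ K * (u s x - sU) := by
        have h3 := hlip (u s x) (memIcc s x hs.1.le hx) sU hsUC
        rw [abs_of_pos (sub_pos.2 hlt)] at h3
        exact (le_abs_self _).trans h3
      rw [hfsU] at h2
      linarith
    have hlo : sL ≤ u a x := by
      refine stmt15_comp (Y := fun _ => sL) (g := fun _ => 0)
        (W := fun τ => u τ x) (w := fun r => f (u r x) - ⨍ y in Ω, f (u r y)) (K := K) ha
        (fun s _ => hasDerivAt_const _ _) (fun s hs => hY s hs.1) ?_ hx0L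
      intro s hs hlt
      have h1 := (hIH s ⟨hs.1.le, hs.2.le⟩).2
      have h2 : f sL - f (u s x) ≤ K * (sL - u s x) := by
        have h3 := hlip sL hsLC (u s x) (memIcc s x hs.1.le hx)
        rw [abs_of_pos (sub_pos.2 hlt)] at h3
        exact (le_abs_self _).trans h3
      rw [hfsL] at h2
      linarith
    -- Phase 2 : robust bound on `[a, t]`
    set c : ℝ := S / K with hcdef
    have hc0 : 0 ≤ c := div_nonneg hS hK.le
    have hKc : K * c = S := by rw [hcdef]; field_simp
    have hed : ∀ r : ℝ, HasDerivAt (fun s : ℝ => Real.exp (K * (s - a)))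
        (K * Real.exp (K * (r - a))) r := by
      intro r
      have h1 : HasDerivAt (fun s : ℝ => K * (s - a)) K r := by
        simpa using ((hasDerivAt_id r).sub_const a).const_mul K
      simpa [mul_comm] using h1.exp
    have heB : Real.exp (K * (t - a)) ≤ 3 / 2 := by
      rw [← hexp]
      exact Real.exp_le_exp.2 (mul_le_mul_of_nonneg_left (by linarith) hK.le)
    have hc2 : c * (Real.exp (K * (t - a)) - 1) ≤ S / (2 * K) := by
      have h4 : c * (Real.exp (K * (t - a)) - 1) ≤ c * (1 / 2) :=
        mul_le_mul_of_nonneg_left (by linarith) hc0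
      have h5 : c * (1 / 2) = S / (2 * K) := by
        rw [hcdef, div_mul_div_comm, mul_one, mul_comm K 2]
      linarith
    have hupper : u t x ≤ sU + S / (2 * K) := by
      have hcomp : u t x ≤ sU + c * (Real.exp (K * (t - a)) - 1) := by
        refine stmt15_comp (Y := fun τ => u τ x)
          (g := fun r => f (u r x) - ⨍ y in Ω, f (u r y))
          (W := fun r => sU + c * (Real.exp (K * (r - a)) - 1))
          (w := fun r => c * (K * Real.exp (K * (r - a)))) (K := K) hat.le
          (fun s hs => hY s (ha.trans hs.1)) ?_ ?_ ?_
        · intro s _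
          exact (((hed s).sub_const 1).const_mul c).const_add sU
        · intro s hs hlt
          have hs0 : 0 ≤ s := ha.trans hs.1.le
          have he1 : 1 ≤ Real.exp (K * (s - a)) :=
            Real.one_le_exp (mul_nonneg hK.le (by linarith [hs.1]))
          have h6 : 0 ≤ c * (Real.exp (K * (s - a)) - 1) := mul_nonneg hc0 (by linarith)
          have h2 : f (u s x) - f sU ≤ K * (u s x - sU) := by
            have h3 := hlip (u s x) (memIcc s x hs0 hx) sU hsUC
            rw [abs_of_pos (by linarith : (0:ℝ) < u s x - sU)] at h3
            exact (le_abs_self _).trans h3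
          rw [hfsU] at h2
          have h1 := (hlamS s ⟨hs.1, hs.2⟩).1
          have hexpand : K * (u s x - (sU + c * (Real.exp (K * (s - a)) - 1)))
              = K * (u s x - sU) - c * (K * Real.exp (K * (s - a))) + K * c := by ring
          rw [hexpand]
          linarith
        · have he : Real.exp (K * (a - a)) = 1 := by rw [sub_self, mul_zero, Real.exp_zero]
          rw [he]
          simpa using hup
      linarith
    have hlower : sL - S / (2 * K) ≤ u t x := by
      have hcomp : sL - c * (Real.exp (K * (t - a)) - 1) ≤ u t x := by
        refine stmt15_comp (Y := fun r => sL - c * (Real.exp (K * (r - a)) - 1))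
          (g := fun r => -(c * (K * Real.exp (K * (r - a)))))
          (W := fun τ => u τ x)
          (w := fun r => f (u r x) - ⨍ y in Ω, f (u r y)) (K := K) hat.le
          ?_ (fun s hs => hY s (ha.trans hs.1)) ?_ ?_
        · intro s _
          exact (((hed s).sub_const 1).const_mul c).const_sub sL
        · intro s hs hlt
          have hs0 : 0 ≤ s := ha.trans hs.1.le
          have he1 : 1 ≤ Real.exp (K * (s - a)) :=
            Real.one_le_exp (mul_nonneg hK.le (by linarith [hs.1]))
          have h6 : 0 ≤ c * (Real.exp (K * (s - a)) - 1) := mul_nonneg hc0 (by linarith)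
          have h2 : f sL - f (u s x) ≤ K * (sL - u s x) := by
            have h3 := hlip sL hsLC (u s x) (memIcc s x hs0 hx)
            rw [abs_of_pos (by linarith : (0:ℝ) < sL - u s x)] at h3
            exact (le_abs_self _).trans h3
          rw [hfsL] at h2
          have h1 := (hlamS s ⟨hs.1, hs.2⟩).2
          have hexpand : K * ((sL - c * (Real.exp (K * (s - a)) - 1)) - u s x)
              = K * (sL - u s x) - c * (K * Real.exp (K * (s - a))) + K * c := by ring
          rw [hexpand]
          linarith
        · have he : Real.exp (K * (a - a)) = 1 := by rw [sub_self, mul_zero, Real.exp_zero]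
          rw [he]
          simpa using hlo
      linarith
    exact ⟨hlower, hupper⟩
  -- turning closeness to `[sL, sU]` into bounds on `f`
  have hproj : ∀ e y : ℝ, 0 ≤ e → y ∈ Icc (-Cb) Cb → sL - e ≤ y → y ≤ sU + e →
      f m - K * e ≤ f y ∧ f y ≤ f M + K * e := by
    intro e y he hyC h1 h2
    set p : ℝ := max sL (min y sU) with hpdef
    have hpmem : p ∈ Icc sL sU := ⟨le_max_left _ _, max_le hsLsU.le (min_le_right _ _)⟩
    have hpC : p ∈ Icc (-Cb) Cb := ⟨hsLC.1.trans hpmem.1, hpmem.2.trans hsUC.2⟩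
    have hyp : |y - p| ≤ e := by
      rcases le_total y sL with hcase | hcase
      · have hmin : min y sU = y := min_eq_left (hcase.trans hsLsU.le)
        have hmax : p = sL := by rw [hpdef, hmin]; exact max_eq_left hcase
        rw [hmax, abs_of_nonpos (by linarith)]
        linarith
      · rcases le_total y sU with hcase2 | hcase2
        · have hpy : p = y := by rw [hpdef, min_eq_left hcase2]; exact max_eq_right hcase
          rw [hpy]
          simpa using he
        · have hpsU : p = sU := by rw [hpdef, min_eq_right hcase2]; exact max_eq_right hsLsU.le
          rw [hpsU, abs_of_nonneg (by linarith)]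
          linarith
    have hfp := hrange p hpmem
    have hlp := hlip y hyC p hpC
    have hKe : |f y - f p| ≤ K * e := hlp.trans (mul_le_mul_of_nonneg_left hyp hK.le)
    have h7 := abs_le.mp hKe
    exact ⟨by linarith [hfp.1, h7.1], by linarith [hfp.2, h7.2]⟩
  -- the window bootstrap
  have window : ∀ a : ℝ, 0 ≤ a →
      (∀ r, r ∈ Icc 0 a → f m ≤ (⨍ y in Ω, f (u r y)) ∧ (⨍ y in Ω, f (u r y)) ≤ f M) →
      ∀ r, r ∈ Icc 0 (a + h₀) →
        f m ≤ (⨍ y in Ω, f (u r y)) ∧ (⨍ y in Ω, f (u r y)) ≤ f M := by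
    intro a ha hIH
    set d : ℝ → ℝ := fun r =>
      max (f m - ⨍ y in Ω, f (u r y)) (max ((⨍ y in Ω, f (u r y)) - f M) 0) with hddef
    have hd0 : ∀ r, 0 ≤ d r := by
      intro r
      simp only [hddef]
      exact le_trans (le_max_right _ 0) (le_max_right _ _)
    have hdB : ∀ r, 0 ≤ r → d r ≤ |f m| + |f M| + F₀ := by
      intro r hr
      have hb := hlamb r hr
      simp only [hddef]
      apply max_le
      · linarith [le_abs_self (f m), hb.1, abs_nonneg (f M)]
      · apply max_le
        · linarith [neg_abs_le (f M), hb.2, abs_nonneg (f m)]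
        · positivity
    set DS : Set ℝ := d '' Ioc a (a + h₀) with hDSdef
    have hDSne : DS.Nonempty := ⟨d (a + h₀), mem_image_of_mem _ ⟨by linarith, le_rfl⟩⟩
    have hDSbd : BddAbove DS := by
      refine ⟨|f m| + |f M| + F₀, ?_⟩
      rintro _ ⟨r, hr, rfl⟩
      exact hdB r (ha.trans hr.1.le)
    set S : ℝ := sSup DS with hSdef
    have hdle : ∀ r, r ∈ Ioc a (a + h₀) → d r ≤ S :=
      fun r hr => le_csSup hDSbd (mem_image_of_mem _ hr)
    have hS0 : 0 ≤ S := le_trans (hd0 (a + h₀)) (hdle _ ⟨by linarith, le_rfl⟩)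
    have hlamS : ∀ r, r ∈ Ioc a (a + h₀) →
        f m - S ≤ (⨍ y in Ω, f (u r y)) ∧ (⨍ y in Ω, f (u r y)) ≤ f M + S := by
      intro r hr
      have hd := hdle r hr
      simp only [hddef] at hd
      have h1 : f m - (⨍ y in Ω, f (u r y)) ≤
          max (f m - ⨍ y in Ω, f (u r y)) (max ((⨍ y in Ω, f (u r y)) - f M) 0) :=
        le_max_left _ _
      have h2 : (⨍ y in Ω, f (u r y)) - f M ≤
          max (f m - ⨍ y in Ω, f (u r y)) (max ((⨍ y in Ω, f (u r y)) - f M) 0) :=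
        le_trans (le_max_left _ 0) (le_max_right _ _)
      exact ⟨by linarith, by linarith⟩
    have hhalf : ∀ t, t ∈ Ioc a (a + h₀) → d t ≤ S / 2 := by
      intro t htI
      have ht0 : 0 ≤ t := ha.trans htI.1.le
      have hae : ∀ᵐ x ∂(volume.restrict Ω),
          f (u t x) ∈ Icc (f m - K * (S / (2 * K))) (f M + K * (S / (2 * K))) := by
        filter_upwards [hinit, ae_restrict_mem ΩM] with x hx0 hxΩ
        have hk := key a ha hIH S hS0 t htI.1 htI.2
          (fun r hr => hlamS r ⟨hr.1, hr.2.le.trans htI.2⟩) x hxΩ hx0.1 hx0.2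
        have hpr := hproj (S / (2 * K)) (u t x) (by positivity) (memIcc t x ht0 hxΩ) hk.1 hk.2
        exact ⟨hpr.1, hpr.2⟩
      have hX0 : 0 ≤ K * (S / (2 * K)) := by positivity
      have hmemavg := havg t _ _ ht0 (by linarith) hae
      have hKS : K * (S / (2 * K)) = S / 2 := by
        field_simp
      rw [hKS] at hmemavg
      simp only [hddef]
      apply max_le
      · linarith [hmemavg.1]
      · apply max_le
        · linarith [hmemavg.2]
        · linarith
    have hS2 : S ≤ S / 2 := by
      rw [hSdef]
      apply Real.sSup_le
      · rintro _ ⟨r, hr, rfl⟩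
        exact hhalf r hr
      · linarith
    intro r hr
    rcases le_or_gt r a with hra | hra
    · exact hIH r ⟨hr.1, hra⟩
    · have hd := hdle r ⟨hra, hr.2⟩
      simp only [hddef] at hd
      have h1 : f m - (⨍ y in Ω, f (u r y)) ≤
          max (f m - ⨍ y in Ω, f (u r y)) (max ((⨍ y in Ω, f (u r y)) - f M) 0) :=
        le_max_left _ _
      have h2 : (⨍ y in Ω, f (u r y)) - f M ≤
          max (f m - ⨍ y in Ω, f (u r y)) (max ((⨍ y in Ω, f (u r y)) - f M) 0) :=
        le_trans (le_max_left _ 0) (le_max_right _ _)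
      constructor <;> linarith
  -- induction over windows
  have base : ∀ r, r ∈ Icc (0:ℝ) 0 →
      f m ≤ (⨍ y in Ω, f (u r y)) ∧ (⨍ y in Ω, f (u r y)) ≤ f M := by
    intro r hr
    have hr0 : r = 0 := le_antisymm hr.2 hr.1
    subst hr0
    have hmem := havg 0 (f m) (f M) le_rfl hfmM (by
      filter_upwards [hinit] with x hx
      exact hrange (u 0 x) ⟨hx.1, hx.2⟩)
    exact ⟨hmem.1, hmem.2⟩
  have main : ∀ n : ℕ, ∀ r, r ∈ Icc 0 ((n : ℝ) * h₀) →
      f m ≤ (⨍ y in Ω, f (u r y)) ∧ (⨍ y in Ω, f (u r y)) ≤ f M := by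
    intro n
    induction n with
    | zero => intro r hr; exact base r (by simpa using hr)
    | succ k ih =>
        intro r hr
        refine window ((k : ℝ) * h₀) (by positivity) ih r ⟨hr.1, ?_⟩
        have h2 := hr.2
        push_cast at h2
        linarith
  have part1 : ∀ t : ℝ, 0 ≤ t →
      f m ≤ (⨍ y in Ω, f (u t y)) ∧ (⨍ y in Ω, f (u t y)) ≤ f M := by
    intro t ht
    obtain ⟨n, hn⟩ := exists_nat_ge (t / h₀)
    exact main n t ⟨ht, by rw [div_le_iff₀ hstep] at hn; linarith⟩
  refine ⟨part1, ?_⟩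
  intro Y hYode t₀ ht₀
  constructor
  · intro hYm t htt
    have hYc : ContinuousOn Y (Icc t₀ t) :=
      fun s hs => (hYode s (ht₀.trans hs.1)).continuousAt.continuousWithinAt
    obtain ⟨R₀, hR₀⟩ := isCompact_Icc.exists_bound_of_continuousOn hYc
    obtain ⟨K', hK', hlip'⟩ := stmt15_lip hf (|R₀| + |m| + |M|)
    have hmmem : m ∈ Icc (-(|R₀| + |m| + |M|)) (|R₀| + |m| + |M|) := by
      constructor
      · linarith [neg_abs_le m, abs_nonneg R₀, abs_nonneg M]
      · linarith [le_abs_self m, abs_nonneg R₀, abs_nonneg M]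
    have hYmem : ∀ s ∈ Icc t₀ t, Y s ∈ Icc (-(|R₀| + |m| + |M|)) (|R₀| + |m| + |M|) := by
      intro s hs
      have h := hR₀ s hs
      rw [Real.norm_eq_abs] at h
      exact abs_le.mp (h.trans (by linarith [le_abs_self R₀, abs_nonneg m, abs_nonneg M]))
    refine stmt15_comp (Y := Y) (W := fun _ => m)
      (g := fun s => f (Y s) - ⨍ y in Ω, f (u s y)) (w := fun _ => 0) (K := K') htt
      (fun s hs => hYode s (ht₀.trans hs.1)) (fun s _ => hasDerivAt_const _ _) ?_ hYm
    intro s hs hlt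
    have h1 := (part1 s (ht₀.trans hs.1.le)).1
    have h2 : f (Y s) - f m ≤ K' * (Y s - m) := by
      have h3 := hlip' (Y s) (hYmem s ⟨hs.1.le, hs.2.le⟩) m hmmem
      rw [abs_of_pos (sub_pos.2 hlt)] at h3
      exact (le_abs_self _).trans h3
    linarith
  · intro hYM t htt
    have hYc : ContinuousOn Y (Icc t₀ t) :=
      fun s hs => (hYode s (ht₀.trans hs.1)).continuousAt.continuousWithinAt
    obtain ⟨R₀, hR₀⟩ := isCompact_Icc.exists_bound_of_continuousOn hYc
    obtain ⟨K', hK', hlip'⟩ := stmt15_lip hf (|R₀| + |m| + |M|)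
    have hMmem : M ∈ Icc (-(|R₀| + |m| + |M|)) (|R₀| + |m| + |M|) := by
      constructor
      · linarith [neg_abs_le M, abs_nonneg R₀, abs_nonneg m]
      · linarith [le_abs_self M, abs_nonneg R₀, abs_nonneg m]
    have hYmem : ∀ s ∈ Icc t₀ t, Y s ∈ Icc (-(|R₀| + |m| + |M|)) (|R₀| + |m| + |M|) := by
      intro s hs
      have h := hR₀ s hs
      rw [Real.norm_eq_abs] at h
      exact abs_le.mp (h.trans (by linarith [le_abs_self R₀, abs_nonneg m, abs_nonneg M]))
    refine stmt15_comp (Y := fun _ => M) (W := Y)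
      (g := fun _ => 0) (w := fun s => f (Y s) - ⨍ y in Ω, f (u s y)) (K := K') htt
      (fun s _ => hasDerivAt_const _ _) (fun s hs => hYode s (ht₀.trans hs.1)) ?_ hYM
    intro s hs hlt
    have h1 := (part1 s (ht₀.trans hs.1.le)).2
    have h2 : f M - f (Y s) ≤ K' * (M - Y s) := by
      have h3 := hlip' M hMmem (Y s) (hYmem s ⟨hs.1.le, hs.2.le⟩)
      rw [abs_of_pos (sub_pos.2 hlt)] at h3
      exact (le_abs_self _).trans h3
    linarith
end

section
/- Let f be bistable as in the standard assumptions with s_* < m < M < s^*, f(s_*) = f(M), f(s^*) = f(m), f strictly decreasing on (-∞,m] and on [M,∞). Suppose φ = a_- χ_{A_-} + a_+ χ_{A_+} and φ̄ = ā_- χ_{A_-} + ā_+ χ_{A_+} with a_-, ā_- ∈ [s_*, m], a_+, ā_+ ∈ [M, s^*], f(a_-) = f(a_+), f(ā_-) = f(ā_+), where A_-, A_+ partition Ω with |A_-|, |A_+| > 0. If ∫_Ω φ = ∫_Ω φ̄, then (a_-, a_+) = (ā_-, ā_+), i.e. φ = φ̄ a.e. -/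
open Set Filter Topology MeasureTheory

/-- Uniqueness of two-valued stationary profiles: two step functions with
values determined by `f(a₋) = f(a₊)` on the same partition and with the same
mass must coincide. -/
theorem stmt17 {N : ℕ} (Ω : Set (Fin N → ℝ)) (hΩm : MeasurableSet Ω)
    (hΩb : Bornology.IsBounded Ω)
    (f : ℝ → ℝ) (m M sL sU : ℝ)
    (hsLm : sL < m) (hmM : m < M) (hMsU : M < sU)
    (hfsL : f sL = f M) (hfsU : f sU = f m)
    (hanti₁ : StrictAntiOn f (Iic m)) (hanti₂ : StrictAntiOn f (Ici M))
    (ANeg APos : Set (Fin N → ℝ))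
    (hANeg : MeasurableSet ANeg) (hAPos : MeasurableSet APos)
    (hdisj : Disjoint ANeg APos) (hunion : ANeg ∪ APos = Ω)
    (hANegpos : 0 < volume ANeg) (hAPospos : 0 < volume APos)
    (aNeg aPos bNeg bPos : ℝ)
    (haNeg : aNeg ∈ Icc sL m) (haPos : aPos ∈ Icc M sU)
    (hbNeg : bNeg ∈ Icc sL m) (hbPos : bPos ∈ Icc M sU)
    (hfa : f aNeg = f aPos) (hfb : f bNeg = f bPos)
    (hmass : (volume ANeg).toReal * aNeg + (volume APos).toReal * aPos
      = (volume ANeg).toReal * bNeg + (volume APos).toReal * bPos) :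
    aNeg = bNeg ∧ aPos = bPos := by
  have hfin : volume Ω ≠ ⊤ := hΩb.measure_lt_top.ne
  have hα : 0 < (volume ANeg).toReal := by
    refine ENNReal.toReal_pos hANegpos.ne' ?_
    exact ne_top_of_le_ne_top hfin (measure_mono (hunion ▸ subset_union_left))
  have hβ : 0 < (volume APos).toReal := by
    refine ENNReal.toReal_pos hAPospos.ne' ?_
    exact ne_top_of_le_ne_top hfin (measure_mono (hunion ▸ subset_union_right))
  have haNm : aNeg ∈ Iic m := haNeg.2
  have hbNm : bNeg ∈ Iic m := hbNeg.2
  have haPM : aPos ∈ Ici M := haPos.1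
  have hbPM : bPos ∈ Ici M := hbPos.1
  rcases lt_trichotomy aNeg bNeg with h | h | h
  · have h1 : f bNeg < f aNeg := hanti₁ haNm hbNm h
    have h2 : f bPos < f aPos := by rwa [hfa, hfb] at h1
    have h3 : aPos < bPos := by
      by_contra hc
      rcases eq_or_lt_of_le (not_lt.mp hc) with he | hl
      · exact absurd (he ▸ h2) (lt_irrefl _)
      · exact absurd h2 (not_lt.mpr (hanti₂ hbPM haPM hl).le)
    nlinarith
  · refine ⟨h, ?_⟩
    have : (volume APos).toReal * aPos = (volume APos).toReal * bPos := by
      rw [h] at hmass; linarith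
    exact mul_left_cancel₀ hβ.ne' this
  · have h1 : f aNeg < f bNeg := hanti₁ hbNm haNm h
    have h2 : f aPos < f bPos := by rwa [hfa, hfb] at h1
    have h3 : bPos < aPos := by
      by_contra hc
      rcases eq_or_lt_of_le (not_lt.mp hc) with he | hl
      · exact absurd (he ▸ h2) (lt_irrefl _)
      · exact absurd h2 (not_lt.mpr (hanti₂ haPM hbPM hl).le)
    nlinarith
end
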